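/- In the left 𝕆-module 𝕆² (with componentwise scalar multiplication), for x = (x₁,x₂) ∈ 𝕆², the submodule generated by x is all of 𝕆², i.e. ⟨x⟩_𝕆 = 𝕆², if and only if x₁ and x₂ are ℝ-linearly independent in 𝕆; equivalently, x is cyclic if and only if x₁, x₂ are ℝ-linearly dependent. -/

import Mathlib

noncomputable section

open scoped Quaternion

/-- The octonions, realized as pairs of quaternions via the Cayley–Dickson construction. -/
def Octo : Type := ℍ[ℝ] × ℍ[ℝ]

namespace Octo

instance : AddCommGroup Octo := inferInstanceAs (AddCommGroup (ℍ[ℝ] × ℍ[ℝ]))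
instance : Module ℝ Octo := inferInstanceAs (Module ℝ (ℍ[ℝ] × ℍ[ℝ]))

/-- Build an octonion from a pair of quaternions. -/
def mk (a b : ℍ[ℝ]) : Octo := (a, b)

/-- First quaternion component. -/
def p1 (x : Octo) : ℍ[ℝ] := (show ℍ[ℝ] × ℍ[ℝ] from x).1

/-- Second quaternion component. -/
def p2 (x : Octo) : ℍ[ℝ] := (show ℍ[ℝ] × ℍ[ℝ] from x).2

/-- Cayley–Dickson multiplication: `(a,b)(c,d) = (ac − d̄b, da + bc̄)`. -/
instance : Mul Octo :=
  ⟨fun x y => mk (p1 x * p1 y - star (p2 y) * p2 x) (p2 y * p1 x + p2 x * star (p1 y))⟩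

instance : One Octo := ⟨mk 1 0⟩

/-- Octonion conjugation: for `x = (a,b)`, `x̄ = (ā, −b)`. -/
def conj (x : Octo) : Octo := mk (star (p1 x)) (-(p2 x))

/-- The octonion associator `[x,y,z] = (xy)z − x(yz)`. -/
def assoc (x y z : Octo) : Octo := x * y * z - x * (y * z)

/-- The octonion commutator `[x,y] = xy − yx`. -/
def comm (x y : Octo) : Octo := x * y - y * x

/-- The canonical embedding of the reals into the octonions. -/
def ofReal (r : ℝ) : Octo := r • (1 : Octo)

end Octo

section OMod

variable {M : Type*} [AddCommGroup M] [Module ℝ M]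
variable {N : Type*} [AddCommGroup N] [Module ℝ N]

/-- `IsOMod sm` says that the scalar multiplication `sm : 𝕆 × M → M` makes the real vector
space `M` a left 𝕆-module: `sm` is ℝ-bilinear, unital, and the left associator is
alternating in its two octonion arguments. -/
structure IsOMod (sm : Octo → M → M) : Prop where
  smul_add : ∀ (p : Octo) (m n : M), sm p (m + n) = sm p m + sm p n
  add_smul : ∀ (p q : Octo) (m : M), sm (p + q) m = sm p m + sm q m
  real_smul : ∀ (r : ℝ) (p : Octo) (m : M), sm (r • p) m = r • sm p m
  smul_real : ∀ (r : ℝ) (p : Octo) (m : M), sm p (r • m) = r • sm p m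
  one_smul : ∀ m : M, sm 1 m = m
  alt : ∀ (p q : Octo) (m : M),
    sm (p * q) m - sm p (sm q m) = -(sm (q * p) m - sm q (sm p m))

/-- The left associator `[p,q,m] = (pq)m − p(qm)`. -/
def oLassoc (sm : Octo → M → M) (p q : Octo) (m : M) : M :=
  sm (p * q) m - sm p (sm q m)

/-- The set `𝒜(M)` of associative elements: `[p,q,m] = 0` for all `p,q ∈ 𝕆`. -/
def assocSet (sm : Octo → M → M) : Set M :=
  {m | ∀ p q : Octo, oLassoc sm p q m = 0}

/-- The set `𝒜⁻(M)` of conjugate associative elements: `(pq)m = q(pm)` for all `p,q ∈ 𝕆`. -/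
def conjAssocSet (sm : Octo → M → M) : Set M :=
  {m | ∀ p q : Octo, sm (p * q) m = sm q (sm p m)}

/-- A homomorphism of left 𝕆-modules: an ℝ-linear map commuting with 𝕆-scalar
multiplication. -/
def IsOHom (sm : Octo → M → M) (sm' : Octo → N → N) (f : M → N) : Prop :=
  IsLinearMap ℝ f ∧ ∀ (p : Octo) (m : M), f (sm p m) = sm' p (f m)

/-- Two left 𝕆-modules are isomorphic if there is a bijective homomorphism between them. -/
def OIso (sm : Octo → M → M) (sm' : Octo → N → N) : Prop :=
  ∃ f : M → N, IsOHom sm sm' f ∧ Function.Bijective f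

/-- A submodule: a real subspace closed under 𝕆-scalar multiplication. -/
structure IsOSubmodule (sm : Octo → M → M) (S : Set M) : Prop where
  zero_mem : (0 : M) ∈ S
  add_mem : ∀ {x y : M}, x ∈ S → y ∈ S → x + y ∈ S
  smul_mem : ∀ (r : ℝ) {x : M}, x ∈ S → r • x ∈ S
  osmul_mem : ∀ (p : Octo) {x : M}, x ∈ S → sm p x ∈ S

/-- `⟨m⟩_𝕆`, the smallest submodule containing `m`, as a set. -/
def genSet (sm : Octo → M → M) (m : M) : Set M :=
  ⋂₀ {S : Set M | IsOSubmodule sm S ∧ m ∈ S}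

/-- An element `m` is cyclic if `⟨m⟩_𝕆 = 𝕆m`. -/
def IsOCyclic (sm : Octo → M → M) (m : M) : Prop :=
  genSet sm m = {x | ∃ p : Octo, x = sm p m}

/-- 𝕆-linear independence of a subset `S ⊆ M`: any finite 𝕆-linear combination of
distinct elements of `S` that vanishes has all coefficients zero. -/
def OLinIndep (sm : Octo → M → M) (S : Set M) : Prop :=
  ∀ (n : ℕ) (s : Fin n → M) (r : Fin n → Octo), Function.Injective s → (∀ i, s i ∈ S) →
    (∑ i, sm (r i) (s i)) = 0 → ∀ i, r i = 0

end OMod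

/-- The canonical left 𝕆-module structure on 𝕆 itself. -/
def oSmul : Octo → Octo → Octo := fun p x => p * x

/-- The left 𝕆-module structure `𝕆̄` on 𝕆: `p ·̂ x = p̄x`. -/
def oBarSmul : Octo → Octo → Octo := fun p x => Octo.conj p * x

/-- The componentwise left 𝕆-module structure on `𝕆²`. -/
def sm2 : Octo → Octo × Octo → Octo × Octo := fun p x => (p * x.1, p * x.2)


-- ===== auxiliary development =====

namespace Octo

lemma ext' (x y : Octo) (h1 : p1 x = p1 y) (h2 : p2 x = p2 y) : x = y := Prod.ext h1 h2
@[simp] lemma p1_mk (a b : ℍ[ℝ]) : p1 (mk a b) = a := rfl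
@[simp] lemma p2_mk (a b : ℍ[ℝ]) : p2 (mk a b) = b := rfl
@[simp] lemma p1_mul (x y : Octo) : p1 (x * y) = p1 x * p1 y - star (p2 y) * p2 x := rfl
@[simp] lemma p2_mul (x y : Octo) : p2 (x * y) = p2 y * p1 x + p2 x * star (p1 y) := rfl
@[simp] lemma p1_add (x y : Octo) : p1 (x + y) = p1 x + p1 y := rfl
@[simp] lemma p2_add (x y : Octo) : p2 (x + y) = p2 x + p2 y := rfl
@[simp] lemma p1_sub (x y : Octo) : p1 (x - y) = p1 x - p1 y := rfl
@[simp] lemma p2_sub (x y : Octo) : p2 (x - y) = p2 x - p2 y := rfl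
@[simp] lemma p1_smul (r : ℝ) (x : Octo) : p1 (r • x) = r • p1 x := rfl
@[simp] lemma p2_smul (r : ℝ) (x : Octo) : p2 (r • x) = r • p2 x := rfl
@[simp] lemma p1_zero : p1 0 = 0 := rfl
@[simp] lemma p2_zero : p2 0 = 0 := rfl
@[simp] lemma p1_one : p1 1 = 1 := rfl
@[simp] lemma p2_one : p2 1 = 0 := rfl

lemma mul_zero' (x : Octo) : x * 0 = 0 := by apply ext' <;> simp
lemma zero_mul' (x : Octo) : 0 * x = 0 := by apply ext' <;> simp
lemma one_mul' (x : Octo) : 1 * x = x := by apply ext' <;> simp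
lemma mul_one' (x : Octo) : x * 1 = x := by apply ext' <;> simp
lemma add_mul' (x y z : Octo) : (x + y) * z = x * z + y * z := by
  apply ext' <;> simp <;> noncomm_ring
lemma mul_add' (x y z : Octo) : x * (y + z) = x * y + x * z := by
  apply ext' <;> simp [star_add] <;> noncomm_ring
lemma sub_mul' (x y z : Octo) : (x - y) * z = x * z - y * z := by
  apply ext' <;> simp <;> noncomm_ring
lemma mul_sub' (x y z : Octo) : x * (y - z) = x * y - x * z := by
  apply ext' <;> simp [star_sub] <;> noncomm_ring
lemma smul_mul' (r : ℝ) (x y : Octo) : (r • x) * y = r • (x * y) := by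
  apply ext' <;> simp [smul_sub, smul_add, mul_smul_comm, smul_mul_assoc]
lemma mul_smul' (r : ℝ) (x y : Octo) : x * (r • y) = r • (x * y) := by
  apply ext' <;> simp [star_smul, smul_sub, smul_add, mul_smul_comm, smul_mul_assoc]

lemma right_alt (x y : Octo) : (x * y) * y = x * (y * y) := by
  obtain ⟨a, b⟩ := x
  obtain ⟨c, d⟩ := y
  have h1 : c + star c = ((2*c.re : ℝ) : ℍ[ℝ]) := by ext <;> simp <;> ring
  have h2 : star d * d = ((Quaternion.normSq d : ℝ) : ℍ[ℝ]) := Quaternion.star_mul_self d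
  have h3 : d * star d = ((Quaternion.normSq d : ℝ) : ℍ[ℝ]) := Quaternion.self_mul_star d
  have h5 : star (c*c - star d*d) = star c * star c - star d * d := by
    simp [star_sub, star_mul, h2]
  apply ext'
  · show (a*c - star d*b)*c - star d*(d*a + b*star c)
        = a*(c*c - star d*d) - star (d*c + d*star c)*b
    have h4 : star (d*c + d*star c) = (c + star c) * star d := by
      simp [star_add, star_mul]; noncomm_ring
    calc (a*c - star d*b)*c - star d*(d*a + b*star c)
        = (a*(c*c) - (star d*d)*a) - (star d * b) * (c + star c) := by noncomm_ring
      _ = a*(c*c - star d*d) - star (d*c + d*star c)*b := by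
          rw [h4, h1, h2, Quaternion.mul_coe_eq_smul, Quaternion.coe_mul_eq_smul,
            Quaternion.coe_mul_eq_smul, mul_sub, Quaternion.mul_coe_eq_smul, smul_mul_assoc]
  · show d*(a*c - star d*b) + (d*a + b*star c)*star c
        = (d*c + d*star c)*a + b*star (c*c - star d*d)
    calc d*(a*c - star d*b) + (d*a + b*star c)*star c
        = (d * a) * (c + star c) - (d * star d) * b + b * (star c * star c) := by noncomm_ring
      _ = (d*c + d*star c)*a + b*star (c*c - star d*d) := by
          have hdc : d*c + d*star c = d * ((2*c.re : ℝ) : ℍ[ℝ]) := by rw [← mul_add, h1]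
          rw [h5, h2, h1, h3, hdc, mul_sub]
          rw [Quaternion.mul_coe_eq_smul, Quaternion.mul_coe_eq_smul, Quaternion.mul_coe_eq_smul,
            Quaternion.coe_mul_eq_smul, smul_mul_assoc]
          abel

/-- the real "norm" of an octonion -/
def nrm (x : Octo) : ℝ := Quaternion.normSq (p1 x) + Quaternion.normSq (p2 x)

lemma nrm_ne_zero {x : Octo} (hx : x ≠ 0) : nrm x ≠ 0 := by
  intro h
  have h1 : Quaternion.normSq (p1 x) = 0 ∧ Quaternion.normSq (p2 x) = 0 := by
    unfold nrm at h
    constructor <;> nlinarith [Quaternion.normSq_nonneg (R := ℝ) (a := p1 x),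
      Quaternion.normSq_nonneg (R := ℝ) (a := p2 x)]
  exact hx (ext' x 0 (by simpa using Quaternion.normSq_eq_zero.1 h1.1)
    (by simpa using Quaternion.normSq_eq_zero.1 h1.2))

lemma mul_conj_self (y : Octo) : y * conj y = (nrm y) • 1 := by
  apply ext'
  · show p1 y * star (p1 y) - star (-(p2 y)) * p2 y = _
    simp [nrm, Quaternion.self_mul_star, Quaternion.star_mul_self]
    ext <;> simp
  · show (-(p2 y)) * p1 y + p2 y * star (star (p1 y)) = _
    simp

lemma conj_eq (y : Octo) : conj y = (2*(p1 y).re) • 1 - y := by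
  apply ext'
  · show star (p1 y) = (2*(p1 y).re) • 1 - p1 y
    ext <;> simp <;> ring
  · show -(p2 y) = (2*(p1 y).re) • 0 - p2 y
    simp

lemma mul_conj_assoc (x y : Octo) : (x * y) * conj y = x * (y * conj y) := by
  simp only [conj_eq, mul_sub', mul_smul', mul_one', right_alt]

instance : FiniteDimensional ℝ Octo := inferInstanceAs (FiniteDimensional ℝ (ℍ[ℝ] × ℍ[ℝ]))

/-- right multiplication as a linear map -/
def rmulLM (u : Octo) : Octo →ₗ[ℝ] Octo where
  toFun p := p * u
  map_add' p q := add_mul' p q u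
  map_smul' r p := smul_mul' r p u

lemma rmul_surj {u : Octo} (hu : u ≠ 0) : ∀ z : Octo, ∃ p : Octo, p * u = z := by
  have hinj : Function.Injective (rmulLM u) := by
    intro p q h
    have h0 : (p - q) * u = 0 := by
      have : p * u = q * u := h
      rw [sub_mul', this, sub_self]
    have h1 : ((p - q) * u) * conj u = 0 := by rw [h0, zero_mul']
    rw [mul_conj_assoc, mul_conj_self, mul_smul', mul_one'] at h1
    have := smul_eq_zero.1 h1
    rcases this with h | h
    · exact absurd h (nrm_ne_zero hu)
    · exact sub_eq_zero.1 h
  have hsurj := LinearMap.injective_iff_surjective.1 hinj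
  intro z
  obtain ⟨p, hp⟩ := hsurj z
  exact ⟨p, hp⟩

lemma one_ne_zero' : (1 : Octo) ≠ 0 := by
  intro h
  have : (1 : ℍ[ℝ]) = 0 := congrArg p1 h
  exact one_ne_zero this

lemma finrank_octo : Module.finrank ℝ Octo = 8 := by
  have e : Octo ≃ₗ[ℝ] (ℍ[ℝ] × ℍ[ℝ]) := LinearEquiv.refl ℝ (ℍ[ℝ] × ℍ[ℝ])
  rw [e.finrank_eq, Module.finrank_prod, Quaternion.finrank_eq_four]

/-- the nucleus of the octonions is ℝ -/
lemma nucleus (c : Octo) (h : ∀ p q : Octo, (p*q)*c = p*(q*c)) : ∃ r : ℝ, c = r • 1 := by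
  set a := p1 c with ha
  set b := p2 c with hb
  have hc : c = mk a b := ext' _ _ rfl rfl
  set qi : ℍ[ℝ] := ⟨0,1,0,0⟩ with hqi
  set qj : ℍ[ℝ] := ⟨0,0,1,0⟩ with hqj
  -- first: b = 0
  have e1 := congrArg p2 (h (mk qi 0) (mk qj 0))
  rw [hc] at e1
  simp only [p2_mul, p1_mul, p1_mk, p2_mk, star_zero, zero_mul, mul_zero, zero_add,
    add_zero, sub_zero] at e1
  have hb0 : b = 0 := by
    have e2 : b * (qi*qj - qj*qi) = 0 := by
      rw [mul_sub, e1, mul_assoc, sub_self]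
    have hk : qi*qj - qj*qi = (⟨0,0,0,2⟩ : ℍ[ℝ]) := by
      ext <;> simp [Quaternion.re_mul, Quaternion.imI_mul,
        Quaternion.imJ_mul, Quaternion.imK_mul] <;> simp [hqi, hqj]
      norm_num
    rw [Quaternion.ext_iff] at e2
    simp [Quaternion.re_mul, Quaternion.imI_mul, Quaternion.imJ_mul,
      Quaternion.imK_mul] at e2
    simp [hqi, hqj] at e2
    ext <;> simp <;> linarith [e2.1, e2.2.1, e2.2.2.1, e2.2.2.2]
  -- second: a is real
  have e3 : ∀ u : ℍ[ℝ], star a * star u = star u * star a := by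
    intro u
    have e := congrArg p2 (h (mk 0 1) (mk u 0))
    rw [hc, hb0] at e
    simp only [p2_mul, p1_mul, p1_mk, p2_mk, star_zero, zero_mul, mul_zero, zero_add,
      add_zero, sub_zero, one_mul, star_mul] at e
    exact e.symm
  have ei := e3 qi
  have ej := e3 qj
  rw [Quaternion.ext_iff] at ei ej
  simp [Quaternion.re_mul, Quaternion.imI_mul, Quaternion.imJ_mul,
    Quaternion.imK_mul, Quaternion.re_star, Quaternion.imI_star, Quaternion.imJ_star,
    Quaternion.imK_star] at ei ej
  simp [hqi, hqj] at ei ej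
  refine ⟨a.re, ?_⟩
  rw [hc, hb0]
  apply ext'
  · show a = a.re • 1
    ext
    · simp
    · simp; linarith [ej.2]
    · simp; linarith [ei.2]
    · simp; linarith [ei.1]
  · show (0 : ℍ[ℝ]) = a.re • 0
    simp

end Octo

section AuxMod
variable {M : Type*} [AddCommGroup M] [Module ℝ M]

lemma mem_genSet {sm : Octo → M → M} {m x : M} :
    x ∈ genSet sm m ↔ ∀ S : Set M, IsOSubmodule sm S → m ∈ S → x ∈ S := by
  rw [genSet, Set.mem_sInter]
  constructor
  · intro hx S h1 h2; exact hx S ⟨h1, h2⟩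
  · intro hx S hS; exact hx S hS.1 hS.2

lemma genSet_isOSubmodule (sm : Octo → M → M) (m : M) : IsOSubmodule sm (genSet sm m) := by
  constructor
  · exact mem_genSet.2 fun S h1 _ => h1.zero_mem
  · intro u v hu hv
    exact mem_genSet.2 fun S h1 h2 =>
      h1.add_mem (mem_genSet.1 hu S h1 h2) (mem_genSet.1 hv S h1 h2)
  · intro r u hu
    exact mem_genSet.2 fun S h1 h2 => h1.smul_mem r (mem_genSet.1 hu S h1 h2)
  · intro p u hu
    exact mem_genSet.2 fun S h1 h2 => h1.osmul_mem p (mem_genSet.1 hu S h1 h2)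

lemma mem_genSet_self {sm : Octo → M → M} {m : M} : m ∈ genSet sm m :=
  mem_genSet.2 fun _ _ h2 => h2

lemma genSet_subset {sm : Octo → M → M} {m : M} {S : Set M}
    (h1 : IsOSubmodule sm S) (h2 : m ∈ S) : genSet sm m ⊆ S :=
  fun _ hx => mem_genSet.1 hx S h1 h2

lemma IsOSubmodule.sub_mem' {sm : Octo → M → M} {S : Set M} (h : IsOSubmodule sm S)
    {u v : M} (hu : u ∈ S) (hv : v ∈ S) : u - v ∈ S := by
  have := h.add_mem hu (h.smul_mem (-1 : ℝ) hv)
  rwa [neg_one_smul, ← sub_eq_add_neg] at this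

end AuxMod

lemma sm2_def (p : Octo) (z : Octo × Octo) : sm2 p z = (p * z.1, p * z.2) := rfl

/-- In `𝕆²`, `⟨x⟩_𝕆 = 𝕆²` iff `x₁, x₂` are ℝ-linearly independent;
equivalently `x` is cyclic iff `x₁, x₂` are ℝ-linearly dependent. -/
theorem stmt18 (x : Octo × Octo) :
    (genSet sm2 x = Set.univ ↔ LinearIndependent ℝ ![x.1, x.2]) ∧
    (IsOCyclic sm2 x ↔ ¬ LinearIndependent ℝ ![x.1, x.2]) := by
  classical
  have hsub : IsOSubmodule sm2 (genSet sm2 x) := genSet_isOSubmodule sm2 x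
  have hxS : x ∈ genSet sm2 x := mem_genSet_self
  have hOXsub : {z : Octo × Octo | ∃ p : Octo, z = sm2 p x} ⊆ genSet sm2 x := by
    rintro z ⟨p, rfl⟩; exact hsub.osmul_mem p hxS
  have main₁ : ¬ LinearIndependent ℝ ![x.1, x.2] →
      IsOCyclic sm2 x ∧ genSet sm2 x ≠ Set.univ := by
    intro hdep
    rw [linearIndependent_fin2] at hdep
    push_neg at hdep
    simp only [Matrix.cons_val_one, Matrix.head_cons, Matrix.cons_val_zero] at hdep
    have cyc_of : (∀ q p : Octo, ∃ p' : Octo, sm2 q (sm2 p x) = sm2 p' x) →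
        IsOCyclic sm2 x := by
      intro hcl
      have hOsub : IsOSubmodule sm2 {z : Octo × Octo | ∃ p : Octo, z = sm2 p x} := by
        constructor
        · exact ⟨0, Prod.ext (Octo.zero_mul' x.1).symm (Octo.zero_mul' x.2).symm⟩
        · rintro u v ⟨p, rfl⟩ ⟨q, rfl⟩
          exact ⟨p + q, Prod.ext (Octo.add_mul' p q x.1).symm (Octo.add_mul' p q x.2).symm⟩
        · rintro r u ⟨p, rfl⟩
          exact ⟨r • p, Prod.ext (Octo.smul_mul' r p x.1).symm (Octo.smul_mul' r p x.2).symm⟩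
        · rintro q u ⟨p, rfl⟩
          exact hcl q p
      exact Set.Subset.antisymm
        (genSet_subset hOsub ⟨1, Prod.ext (Octo.one_mul' x.1).symm (Octo.one_mul' x.2).symm⟩)
        hOXsub
    by_cases h2 : x.2 = 0
    · constructor
      · apply cyc_of
        intro q p
        by_cases h1 : x.1 = 0
        · refine ⟨0, Prod.ext ?_ ?_⟩
          · show q * (p * x.1) = 0 * x.1
            rw [h1, Octo.mul_zero', Octo.mul_zero', Octo.zero_mul']
          · show q * (p * x.2) = 0 * x.2
            rw [h2, Octo.mul_zero', Octo.mul_zero', Octo.zero_mul']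
        · obtain ⟨p', hp'⟩ := Octo.rmul_surj h1 (q * (p * x.1))
          refine ⟨p', Prod.ext ?_ ?_⟩
          · exact hp'.symm
          · show q * (p * x.2) = p' * x.2
            rw [h2, Octo.mul_zero', Octo.mul_zero', Octo.mul_zero']
      · intro huniv
        have hGsub : IsOSubmodule sm2 {y : Octo × Octo | y.2 = 0} := by
          constructor
          · rfl
          · intro u v hu hv; show (u + v).2 = 0; rw [Prod.snd_add, hu, hv, add_zero]
          · intro r u hu; show (r • u).2 = 0; rw [Prod.smul_snd, hu, smul_zero]
          · intro p u hu; show p * u.2 = 0; rw [hu, Octo.mul_zero']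
        have hss := genSet_subset hGsub h2
        have hmem : (((0 : Octo), (1 : Octo)) : Octo × Octo) ∈ genSet sm2 x := by
          rw [huniv]; trivial
        exact Octo.one_ne_zero' (hss hmem)
    · obtain ⟨a, ha⟩ := hdep h2
      constructor
      · apply cyc_of
        intro q p
        obtain ⟨p', hp'⟩ := Octo.rmul_surj h2 (q * (p * x.2))
        refine ⟨p', Prod.ext ?_ ?_⟩
        · show q * (p * x.1) = p' * x.1
          rw [← ha, Octo.mul_smul', Octo.mul_smul', Octo.mul_smul', hp']
        · exact hp'.symm
      · intro huniv
        have hGsub : IsOSubmodule sm2 {y : Octo × Octo | y.1 = a • y.2} := by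
          constructor
          · show (0 : Octo) = a • (0 : Octo); rw [smul_zero]
          · intro u v hu hv; show (u + v).1 = a • (u + v).2
            rw [Prod.fst_add, Prod.snd_add, hu, hv, smul_add]
          · intro r u hu; show (r • u).1 = a • (r • u).2
            rw [Prod.smul_fst, Prod.smul_snd, hu]; exact smul_comm r a u.2
          · intro p u hu; show p * u.1 = a • (p * u.2)
            rw [hu, Octo.mul_smul']
        have hss := genSet_subset hGsub (show x.1 = a • x.2 from ha.symm)
        have hmem : (((1 : Octo), (0 : Octo)) : Octo × Octo) ∈ genSet sm2 x := by
          rw [huniv]; trivial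
        have h1 : (1 : Octo) = a • (0 : Octo) := hss hmem
        rw [smul_zero] at h1
        exact Octo.one_ne_zero' h1
  have main₂ : LinearIndependent ℝ ![x.1, x.2] → genSet sm2 x = Set.univ := by
    intro hli
    have hx1 : x.1 ≠ 0 := by have := hli.ne_zero 0; simpa using this
    have hx2 : x.2 ≠ 0 := by have := hli.ne_zero 1; simpa using this
    have hrel : ∀ r : ℝ, x.2 ≠ r • x.1 := by
      intro r hr
      rw [linearIndependent_fin2] at hli
      simp only [Matrix.cons_val_one, Matrix.head_cons, Matrix.cons_val_zero] at hli
      rcases eq_or_ne r 0 with h0 | h0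
      · rw [h0, zero_smul] at hr; exact hx2 hr
      · exact hli.2 r⁻¹ (by rw [hr, smul_smul, inv_mul_cancel₀ h0, one_smul])
    have fill1 : ∀ y : Octo, y ≠ 0 → ((y, (0 : Octo)) : Octo × Octo) ∈ genSet sm2 x →
        genSet sm2 x = Set.univ := by
      intro y hy hmem
      have all1 : ∀ w : Octo, ((w, (0 : Octo)) : Octo × Octo) ∈ genSet sm2 x := by
        intro w
        obtain ⟨p, hp⟩ := Octo.rmul_surj hy w
        have hm := hsub.osmul_mem p hmem
        have he : sm2 p ((y, (0 : Octo)) : Octo × Octo) = ((w, 0) : Octo × Octo) := by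
          rw [sm2_def]; exact Prod.ext hp (Octo.mul_zero' p)
        rwa [he] at hm
      have h0x2 : (((0 : Octo), x.2) : Octo × Octo) ∈ genSet sm2 x := by
        have hm := hsub.sub_mem' hxS (all1 x.1)
        have he : x - ((x.1, (0 : Octo)) : Octo × Octo) = (((0 : Octo), x.2) : Octo × Octo) := by
          apply Prod.ext
          · show x.1 - x.1 = 0; rw [sub_self]
          · show x.2 - 0 = x.2; rw [sub_zero]
        rwa [he] at hm
      have all2 : ∀ v : Octo, (((0 : Octo), v) : Octo × Octo) ∈ genSet sm2 x := by
        intro v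
        obtain ⟨p, hp⟩ := Octo.rmul_surj hx2 v
        have hm := hsub.osmul_mem p h0x2
        have he : sm2 p (((0 : Octo), x.2) : Octo × Octo) = (((0 : Octo), v) : Octo × Octo) := by
          rw [sm2_def]; exact Prod.ext (Octo.mul_zero' p) hp
        rwa [he] at hm
      apply Set.eq_univ_of_forall
      intro z
      have hm := hsub.add_mem (all1 z.1) (all2 z.2)
      have he : ((z.1, (0 : Octo)) : Octo × Octo) + (((0 : Octo), z.2) : Octo × Octo) = z := by
        apply Prod.ext
        · show z.1 + 0 = z.1; rw [add_zero]
        · show 0 + z.2 = z.2; rw [zero_add]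
      rwa [he] at hm
    have fill2 : ∀ y : Octo, y ≠ 0 → (((0 : Octo), y) : Octo × Octo) ∈ genSet sm2 x →
        genSet sm2 x = Set.univ := by
      intro y hy hmem
      have all2 : ∀ v : Octo, (((0 : Octo), v) : Octo × Octo) ∈ genSet sm2 x := by
        intro v
        obtain ⟨p, hp⟩ := Octo.rmul_surj hy v
        have hm := hsub.osmul_mem p hmem
        have he : sm2 p (((0 : Octo), y) : Octo × Octo) = (((0 : Octo), v) : Octo × Octo) := by
          rw [sm2_def]; exact Prod.ext (Octo.mul_zero' p) hp
        rwa [he] at hm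
      have hx10 : ((x.1, (0 : Octo)) : Octo × Octo) ∈ genSet sm2 x := by
        have hm := hsub.sub_mem' hxS (all2 x.2)
        have he : x - (((0 : Octo), x.2) : Octo × Octo) = ((x.1, (0 : Octo)) : Octo × Octo) := by
          apply Prod.ext
          · show x.1 - 0 = x.1; rw [sub_zero]
          · show x.2 - x.2 = 0; rw [sub_self]
        rwa [he] at hm
      exact fill1 x.1 hx1 hx10
    by_cases hV : ∃ y : Octo, y ≠ 0 ∧ ((y, (0 : Octo)) : Octo × Octo) ∈ genSet sm2 x
    · obtain ⟨y, hy, hm⟩ := hV; exact fill1 y hy hm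
    by_cases hW : ∃ y : Octo, y ≠ 0 ∧ (((0 : Octo), y) : Octo × Octo) ∈ genSet sm2 x
    · obtain ⟨y, hy, hm⟩ := hW; exact fill2 y hy hm
    push_neg at hV hW
    exfalso
    have uniq : ∀ (y z z' : Octo), ((y, z) : Octo × Octo) ∈ genSet sm2 x →
        ((y, z') : Octo × Octo) ∈ genSet sm2 x → z = z' := by
      intro y z z' hm1 hm2
      by_contra hne
      have hd : z - z' ≠ 0 := sub_ne_zero.2 hne
      have hm := hsub.sub_mem' hm1 hm2
      rw [Prod.mk_sub_mk, sub_self] at hm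
      exact hW (z - z') hd hm
    obtain ⟨p₀, hp₀⟩ := Octo.rmul_surj hx1 (1 : Octo)
    set c : Octo := p₀ * x.2 with hcdef
    have h1c : (((1 : Octo), c) : Octo × Octo) ∈ genSet sm2 x := by
      have hm := hsub.osmul_mem p₀ hxS
      have he : sm2 p₀ x = (((1 : Octo), c) : Octo × Octo) := by
        rw [sm2_def]; exact Prod.ext hp₀ rfl
      rwa [he] at hm
    have key1 : ∀ q : Octo, ((q, q * c) : Octo × Octo) ∈ genSet sm2 x := by
      intro q
      have hm := hsub.osmul_mem q h1c
      have he : sm2 q (((1 : Octo), c) : Octo × Octo) = ((q, q * c) : Octo × Octo) := by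
        rw [sm2_def]; exact Prod.ext (Octo.mul_one' q) rfl
      rwa [he] at hm
    have key2 : ∀ p q : Octo, (p * q) * c = p * (q * c) := by
      intro p q
      have m1 := key1 (p * q)
      have m2 := hsub.osmul_mem p (key1 q)
      have he : sm2 p (((q, q * c)) : Octo × Octo) = ((p * q, p * (q * c)) : Octo × Octo) := rfl
      rw [he] at m2
      exact uniq (p * q) _ _ m1 m2
    obtain ⟨r, hr⟩ := Octo.nucleus c key2
    have hx2c : x.2 = x.1 * c :=
      uniq x.1 x.2 (x.1 * c) (by rw [Prod.mk.eta]; exact hxS) (key1 x.1)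
    rw [hr, Octo.mul_smul', Octo.mul_one'] at hx2c
    exact hrel r hx2c
  have main₃ : LinearIndependent ℝ ![x.1, x.2] → ¬ IsOCyclic sm2 x := by
    intro hli hcyc
    have huniv := main₂ hli
    rw [IsOCyclic, huniv] at hcyc
    let L : Octo →ₗ[ℝ] Octo × Octo := {
      toFun := fun p => sm2 p x
      map_add' := fun p q => Prod.ext (Octo.add_mul' p q x.1) (Octo.add_mul' p q x.2)
      map_smul' := fun r p => Prod.ext (Octo.smul_mul' r p x.1) (Octo.smul_mul' r p x.2) }
    have hsurj : Function.Surjective L := by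
      intro z
      have hz : z ∈ {z : Octo × Octo | ∃ p : Octo, z = sm2 p x} := by rw [← hcyc]; trivial
      obtain ⟨p, hp⟩ := hz
      exact ⟨p, hp.symm⟩
    have hrange : LinearMap.range L = ⊤ := LinearMap.range_eq_top.2 hsurj
    have h1 : Module.finrank ℝ (Octo × Octo) ≤ Module.finrank ℝ Octo := by
      have h2 := LinearMap.finrank_range_le L
      rwa [hrange, finrank_top] at h2
    rw [Module.finrank_prod, Octo.finrank_octo] at h1
    norm_num at h1
  refine ⟨⟨?_, main₂⟩, ?_, ?_⟩
  · intro h; by_contra hdep; exact (main₁ hdep).2 h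
  · intro hcyc hli; exact main₃ hli hcyc
  · intro hdep; exact (main₁ hdep).1
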